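/- arXiv:2509.02166 — 3 statements merged into one kernel-verified Lean document; each statement's English description precedes it below -/
import Mathlib

section
/- Let d > 0, x̃₁ ≤ … ≤ x̃_M real with x̃_M - x̃₁ < d/√3, and L(x) = ∑_m 1/((x - x̃_m)² + d²). Then L is strictly concave on the interval [x̃₁, x̃_M]. -/
private lemma term_sc (d c a b : ℝ) (hd : 0 < d) (hca : a ≤ c) (hcb : c ≤ b)
    (hspread : b - a < d / Real.sqrt 3) :
    StrictConcaveOn ℝ (Set.Icc a b) (fun x => 1 / ((x - c) ^ 2 + d ^ 2)) := by
  have hqpos : ∀ x : ℝ, 0 < (x - c) ^ 2 + d ^ 2 := fun x => by positivity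
  have hd1 : ∀ x : ℝ, HasDerivAt (fun x => (x - c) ^ 2 + d ^ 2) (2 * (x - c)) x := by
    intro x
    have h := (((hasDerivAt_id x).sub_const c).pow 2).add_const (d ^ 2)
    simpa using h
  have hderiv : ∀ x : ℝ, HasDerivAt (fun x => 1 / ((x - c) ^ 2 + d ^ 2))
      (-(2 * (x - c)) / ((x - c) ^ 2 + d ^ 2) ^ 2) x := by
    intro x
    simpa [one_div, Pi.inv_def] using (hd1 x).inv (hqpos x).ne'
  have hderiv_eq : deriv (fun x => 1 / ((x - c) ^ 2 + d ^ 2)) =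
      fun x => -(2 * (x - c)) / ((x - c) ^ 2 + d ^ 2) ^ 2 :=
    funext fun x => (hderiv x).deriv
  apply strictConcaveOn_of_deriv2_neg (convex_Icc a b)
  · exact (continuous_const.div (by continuity) fun x => (hqpos x).ne').continuousOn
  · intro x hx
    rw [interior_Icc] at hx
    have habs : (x - c) ^ 2 < d ^ 2 / 3 := by
      have hs3 : (0:ℝ) < Real.sqrt 3 := Real.sqrt_pos.mpr (by norm_num)
      have h1 : |x - c| < d / Real.sqrt 3 := by
        rw [abs_lt]
        constructor <;> nlinarith [hx.1, hx.2]
      have h2 : (x - c) ^ 2 < (d / Real.sqrt 3) ^ 2 := by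
        calc (x - c) ^ 2 = |x - c| ^ 2 := (sq_abs _).symm
          _ < (d / Real.sqrt 3) ^ 2 := by
            apply pow_lt_pow_left₀ h1 (abs_nonneg _) (by norm_num)
      calc (x - c) ^ 2 < (d / Real.sqrt 3) ^ 2 := h2
        _ = d ^ 2 / 3 := by
          rw [div_pow, Real.sq_sqrt (by norm_num : (0:ℝ) ≤ 3)]
    -- second derivative
    have hd2 : HasDerivAt (deriv (fun x => 1 / ((x - c) ^ 2 + d ^ 2)))
        ((-(2:ℝ) * (((x - c) ^ 2 + d ^ 2) ^ 2) - (-(2 * (x - c))) * (2 * ((x - c) ^ 2 + d ^ 2) * (2 * (x - c)))) / (((x - c) ^ 2 + d ^ 2) ^ 2) ^ 2) x := by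
      rw [hderiv_eq]
      have hnum : HasDerivAt (fun x : ℝ => -(2 * (x - c))) (-(2:ℝ)) x := by
        have := ((hasDerivAt_id x).sub_const c).const_mul (2:ℝ)
        simpa [Pi.neg_def] using this.neg
      have hden : HasDerivAt (fun x : ℝ => ((x - c) ^ 2 + d ^ 2) ^ 2)
          (2 * ((x - c) ^ 2 + d ^ 2) * (2 * (x - c))) x := by
        have := (hd1 x).pow 2
        simpa [Pi.pow_def, mul_comm, mul_assoc, mul_left_comm] using this
      exact hnum.div hden (pow_ne_zero 2 (hqpos x).ne')
    rw [show deriv^[2] (fun x => 1 / ((x - c) ^ 2 + d ^ 2)) = deriv (deriv (fun x => 1 / ((x - c) ^ 2 + d ^ 2))) from rfl, hd2.deriv]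
    have hq := hqpos x
    apply div_neg_of_neg_of_pos
    · nlinarith [sq_nonneg (x - c), sq_nonneg d]
    · positivity

theorem stmt_5 (d : ℝ) (hd : 0 < d) (M : ℕ) (hM : 1 ≤ M)
    (xt : Fin M → ℝ) (hmono : Monotone xt)
    (hspread : xt ⟨M - 1, Nat.sub_lt hM one_pos⟩ - xt ⟨0, hM⟩ < d / Real.sqrt 3)
    (L : ℝ → ℝ) (hL : ∀ x, L x = ∑ m, 1 / ((x - xt m) ^ 2 + d ^ 2)) :
    StrictConcaveOn ℝ (Set.Icc (xt ⟨0, hM⟩) (xt ⟨M - 1, Nat.sub_lt hM one_pos⟩)) L := by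
  have hLe : L = fun x => ∑ m, 1 / ((x - xt m) ^ 2 + d ^ 2) := funext hL
  subst hLe
  have hterm : ∀ m : Fin M, StrictConcaveOn ℝ
      (Set.Icc (xt ⟨0, hM⟩) (xt ⟨M - 1, Nat.sub_lt hM one_pos⟩))
      (fun x => 1 / ((x - xt m) ^ 2 + d ^ 2)) := by
    intro m
    apply term_sc d (xt m) _ _ hd
      (hmono (by simp [Fin.le_def]))
      (hmono (by simp [Fin.le_def]; omega)) hspread
  have key : ∀ s : Finset (Fin M), s.Nonempty →
      StrictConcaveOn ℝ (Set.Icc (xt ⟨0, hM⟩) (xt ⟨M - 1, Nat.sub_lt hM one_pos⟩))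
        (fun x => ∑ m ∈ s, 1 / ((x - xt m) ^ 2 + d ^ 2)) := by
    intro s hs
    induction hs using Finset.Nonempty.cons_induction with
    | singleton i => simpa using hterm i
    | cons i s hi hs ih =>
        simp only [Finset.sum_cons]
        exact (hterm i).add ih
  have := key Finset.univ (Finset.univ_nonempty_iff.mpr ⟨⟨0, hM⟩⟩)
  simpa using this
end

section
/- Let d > 0, x̃₁ ≤ … ≤ x̃_M with x̃_M - x̃₁ < d/√3, and L(x) = ∑_m 1/((x - x̃_m)² + d²). Then L has a unique global maximizer over ℝ, which lies in [x̃₁, x̃_M]. -/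
lemma derivA (d c x : ℝ) (hd : 0 < d) :
    HasDerivAt (fun x => ((x - c) ^ 2 + d ^ 2)⁻¹)
      (-(2 * (x - c)) * (((x - c) ^ 2 + d ^ 2) ^ 2)⁻¹) x := by
  have h1 : HasDerivAt (fun x : ℝ => x - c) 1 x := (hasDerivAt_id x).sub_const c
  have hu : HasDerivAt (fun x => (x - c) ^ 2 + d ^ 2) (2 * (x - c)) x := by
    have := (h1.fun_pow 2).add_const (d ^ 2)
    exact this.congr_deriv (by ring)
  have hne : (x - c) ^ 2 + d ^ 2 ≠ 0 := by positivity
  have := hu.fun_inv hne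
  exact this.congr_deriv (by ring)

lemma derivB (d c x : ℝ) (hd : 0 < d) :
    HasDerivAt (fun x => -(2 * (x - c)) * (((x - c) ^ 2 + d ^ 2) ^ 2)⁻¹)
      (-2 * (((x - c) ^ 2 + d ^ 2) ^ 2)⁻¹
        + 8 * (x - c) ^ 2 * (((x - c) ^ 2 + d ^ 2) ^ 3)⁻¹) x := by
  have h1 : HasDerivAt (fun x : ℝ => x - c) 1 x := (hasDerivAt_id x).sub_const c
  have hu : HasDerivAt (fun x => (x - c) ^ 2 + d ^ 2) (2 * (x - c)) x := by
    have := (h1.fun_pow 2).add_const (d ^ 2)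
    exact this.congr_deriv (by ring)
  have hne : (x - c) ^ 2 + d ^ 2 ≠ 0 := by positivity
  have hf : HasDerivAt (fun x : ℝ => -(2 * (x - c))) (-2) x := by
    have := (h1.const_mul (2 : ℝ)).fun_neg
    exact this.congr_deriv (by ring)
  have hu2 : HasDerivAt (fun x => ((x - c) ^ 2 + d ^ 2) ^ 2)
      (2 * ((x - c) ^ 2 + d ^ 2) ^ 1 * (2 * (x - c))) x := hu.pow 2
  have hne2 : ((x - c) ^ 2 + d ^ 2) ^ 2 ≠ 0 := pow_ne_zero _ hne
  have hinv := hu2.fun_inv hne2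
  have := hf.mul hinv
  refine this.congr_deriv ?_
  field_simp
  ring

theorem stmt_6 (d : ℝ) (hd : 0 < d) (M : ℕ) (hM : 1 ≤ M)
    (xt : Fin M → ℝ) (hmono : Monotone xt)
    (hspread : xt ⟨M - 1, Nat.sub_lt hM one_pos⟩ - xt ⟨0, hM⟩ < d / Real.sqrt 3)
    (L : ℝ → ℝ) (hL : ∀ x, L x = ∑ m, 1 / ((x - xt m) ^ 2 + d ^ 2)) :
    (∃! x₀ : ℝ, ∀ x, L x ≤ L x₀) ∧
    (∀ x₀ : ℝ, (∀ x, L x ≤ L x₀) →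
      x₀ ∈ Set.Icc (xt ⟨0, hM⟩) (xt ⟨M - 1, Nat.sub_lt hM one_pos⟩)) := by
  haveI : Nonempty (Fin M) := ⟨⟨0, hM⟩⟩
  set a := xt ⟨0, hM⟩ with ha
  set b := xt ⟨M - 1, Nat.sub_lt hM one_pos⟩ with hb
  have hbound : ∀ m : Fin M, a ≤ xt m ∧ xt m ≤ b := by
    intro m
    constructor
    · exact hmono (by simp [Fin.le_def])
    · exact hmono (by simp [Fin.le_def]; omega)
  have hab : a ≤ b := (hbound ⟨0, hM⟩).2
  have hLfun : L = fun x => ∑ m, ((x - xt m) ^ 2 + d ^ 2)⁻¹ := by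
    funext x; rw [hL]; simp [one_div]
  -- first derivative
  have hLd : ∀ x : ℝ, HasDerivAt L
      (∑ m, -(2 * (x - xt m)) * (((x - xt m) ^ 2 + d ^ 2) ^ 2)⁻¹) x := by
    intro x
    rw [hLfun]
    exact HasDerivAt.fun_sum fun m _ => derivA d (xt m) x hd
  have hderivL : deriv L = fun x =>
      ∑ m, -(2 * (x - xt m)) * (((x - xt m) ^ 2 + d ^ 2) ^ 2)⁻¹ :=
    funext fun x => (hLd x).deriv
  have hcont : Continuous L := by
    rw [continuous_iff_continuousAt]; exact fun x => (hLd x).continuousAt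
  -- strict monotonicity outside [a,b]
  have hmonoL : StrictMonoOn L (Set.Iic a) := by
    apply strictMonoOn_of_deriv_pos (convex_Iic a) hcont.continuousOn
    intro x hx
    rw [interior_Iic] at hx
    rw [hderivL]
    apply Finset.sum_pos
    · intro m _
      have h1 : x < xt m := lt_of_lt_of_le hx (hbound m).1
      have : 0 < -(2 * (x - xt m)) := by linarith
      positivity
    · exact Finset.univ_nonempty
  have hantiL : StrictAntiOn L (Set.Ici b) := by
    apply strictAntiOn_of_deriv_neg (convex_Ici b) hcont.continuousOn
    intro x hx
    rw [interior_Ici] at hx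
    rw [hderivL]
    apply Finset.sum_neg
    · intro m _
      have h1 : xt m < x := lt_of_le_of_lt (hbound m).2 hx
      have h2 : -(2 * (x - xt m)) < 0 := by linarith
      have h3 : (0:ℝ) < (((x - xt m) ^ 2 + d ^ 2) ^ 2)⁻¹ := by positivity
      exact mul_neg_of_neg_of_pos h2 h3
    · exact Finset.univ_nonempty
  -- strict concavity on [a,b]
  have hconc : StrictConcaveOn ℝ (Set.Icc a b) L := by
    apply strictConcaveOn_of_deriv2_neg (convex_Icc a b) hcont.continuousOn
    intro x hx
    rw [interior_Icc] at hx
    have hdd : deriv (deriv L) x =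
        ∑ m, (-2 * (((x - xt m) ^ 2 + d ^ 2) ^ 2)⁻¹
          + 8 * (x - xt m) ^ 2 * (((x - xt m) ^ 2 + d ^ 2) ^ 3)⁻¹) := by
      rw [hderivL]
      exact HasDerivAt.deriv (HasDerivAt.fun_sum fun m _ => derivB d (xt m) x hd)
    have : deriv^[2] L x = deriv (deriv L) x := by
      simp [Function.iterate_succ, Function.comp]
    rw [this, hdd]
    apply Finset.sum_neg
    · intro m _
      have hm := hbound m
      have habs : (x - xt m) ^ 2 < d ^ 2 / 3 := by
        have h3 : (0:ℝ) < Real.sqrt 3 := Real.sqrt_pos.mpr (by norm_num)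
        have hba : b - a < d / Real.sqrt 3 := hspread
        have h1 : |x - xt m| < b - a := by
          rw [abs_lt]; constructor <;> [linarith [hx.1, hm.2]; linarith [hx.2, hm.1]]
        have h2 : |x - xt m| < d / Real.sqrt 3 := lt_trans h1 hba
        have h4 : (x - xt m) ^ 2 < (d / Real.sqrt 3) ^ 2 := by
          rw [← sq_abs]
          exact pow_lt_pow_left₀ h2 (abs_nonneg _) (by norm_num)
        calc (x - xt m) ^ 2 < (d / Real.sqrt 3) ^ 2 := h4
          _ = d ^ 2 / 3 := by
            rw [div_pow, Real.sq_sqrt (by norm_num : (3:ℝ) ≥ 0)]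
      set u := (x - xt m) ^ 2 + d ^ 2 with hu
      have hupos : 0 < u := by positivity
      have key : -2 * (u ^ 2)⁻¹ + 8 * (x - xt m) ^ 2 * (u ^ 3)⁻¹
          = (6 * (x - xt m) ^ 2 - 2 * d ^ 2) * (u ^ 3)⁻¹ := by
        field_simp
        ring
      rw [key]
      apply mul_neg_of_neg_of_pos
      · nlinarith
      · positivity
    · exact Finset.univ_nonempty
  -- existence of maximizer on [a,b]
  obtain ⟨x₀, hx₀mem, hx₀max⟩ :=
    (isCompact_Icc (a := a) (b := b)).exists_isMaxOn (Set.nonempty_Icc.mpr hab)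
      hcont.continuousOn
  have hglobal : ∀ x, L x ≤ L x₀ := by
    intro x
    rcases lt_or_ge x a with h | h
    · have : L x < L a := hmonoL (Set.mem_Iic.mpr h.le) (Set.mem_Iic.mpr le_rfl) h
      exact le_trans this.le (hx₀max (Set.left_mem_Icc.mpr hab))
    · rcases le_or_gt x b with h2 | h2
      · exact hx₀max ⟨h, h2⟩
      · have : L x < L b := hantiL (Set.mem_Ici.mpr le_rfl) (Set.mem_Ici.mpr h2.le) h2
        exact le_trans this.le (hx₀max (Set.right_mem_Icc.mpr hab))
  have hmemOf : ∀ y : ℝ, (∀ x, L x ≤ L y) → y ∈ Set.Icc a b := by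
    intro y hy
    constructor
    · by_contra hya
      push_neg at hya
      have h1 : L y < L a := hmonoL (Set.mem_Iic.mpr hya.le) (Set.mem_Iic.mpr le_rfl) hya
      exact absurd (hy a) (not_le.mpr h1)
    · by_contra hyb
      push_neg at hyb
      have h1 : L y < L b := hantiL (Set.mem_Ici.mpr le_rfl) (Set.mem_Ici.mpr hyb.le) hyb
      exact absurd (hy b) (not_le.mpr h1)
  refine ⟨⟨x₀, hglobal, ?_⟩, hmemOf⟩
  intro y hy
  by_contra hne
  have hymem := hmemOf y hy
  have hx₀mem' : x₀ ∈ Set.Icc a b := hx₀mem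
  have heq : L y = L x₀ := le_antisymm (hglobal y) (hy x₀)
  have hmid := hconc.2 hymem hx₀mem' hne (by norm_num : (0:ℝ) < 1/2)
    (by norm_num : (0:ℝ) < 1/2) (by norm_num)
  have hmidle : L ((1/2 : ℝ) • y + (1/2 : ℝ) • x₀) ≤ L x₀ := hglobal _
  rw [heq] at hmid
  simp only [smul_eq_mul] at hmid hmidle
  linarith
end

section
/- Let d > 0 and suppose x̃₁, …, x̃_M are symmetric about c with max_m x̃_m - min_m x̃_m < d/√3. Then c is the unique global maximizer of L(x) = ∑_m 1/((x - x̃_m)² + d²). -/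
lemma pair_max (d t s : ℝ) (hd : 0 < d) (ht : t ≠ 0) (hs : 3 * s ^ 2 < d ^ 2) :
    1 / ((t + s) ^ 2 + d ^ 2) + 1 / ((t - s) ^ 2 + d ^ 2) < 2 * (1 / (s ^ 2 + d ^ 2)) := by
  have hA : 0 < (t + s) ^ 2 + d ^ 2 := by positivity
  have hB : 0 < (t - s) ^ 2 + d ^ 2 := by positivity
  have hC : 0 < s ^ 2 + d ^ 2 := by positivity
  have ht2 : 0 < t ^ 2 := by positivity
  rw [div_add_div _ _ hA.ne' hB.ne', mul_one_div, div_lt_div_iff₀ (by positivity) hC]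
  nlinarith [mul_pos ht2 (show (0:ℝ) < t ^ 2 + d ^ 2 - 3 * s ^ 2 by nlinarith),
    mul_pos ht2 ht2, sq_nonneg s]

theorem stmt_9 (d : ℝ) (hd : 0 < d) (M : ℕ) (hM : 1 ≤ M)
    (xt : Fin M → ℝ) (hmono : Monotone xt) (c : ℝ)
    (hsym : ∀ i, xt (Fin.rev i) = 2 * c - xt i)
    (hspread : xt ⟨M - 1, Nat.sub_lt hM one_pos⟩ - xt ⟨0, hM⟩ < d / Real.sqrt 3)
    (L : ℝ → ℝ) (hL : ∀ x, L x = ∑ m, 1 / ((x - xt m) ^ 2 + d ^ 2)) :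
    ∀ x ≠ c, L x < L c := by
  intro x hx
  have hne : Nonempty (Fin M) := ⟨⟨0, hM⟩⟩
  have hrt3 : (0:ℝ) < Real.sqrt 3 := Real.sqrt_pos.mpr (by norm_num)
  have hrt3sq : (d / Real.sqrt 3) ^ 2 = d ^ 2 / 3 := by
    rw [div_pow, Real.sq_sqrt (by norm_num : (3:ℝ) ≥ 0)]
  have key : ∀ m : Fin M,
      1 / ((x - xt m) ^ 2 + d ^ 2) + 1 / ((x - xt (Fin.rev m)) ^ 2 + d ^ 2)
        < 2 * (1 / ((c - xt m) ^ 2 + d ^ 2)) := by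
    intro m
    have hlo : ∀ k : Fin M, xt ⟨0, hM⟩ ≤ xt k := fun k =>
      hmono (show (⟨0, hM⟩ : Fin M) ≤ k from Fin.mk_le_of_le_val (Nat.zero_le _))
    have hhi : ∀ k : Fin M, xt k ≤ xt ⟨M - 1, Nat.sub_lt hM one_pos⟩ := fun k =>
      hmono (Fin.le_def.mpr (Nat.le_sub_one_of_lt k.isLt))
    have h1 : xt (Fin.rev m) - xt m < d / Real.sqrt 3 :=
      lt_of_le_of_lt (by have := hlo m; have := hhi (Fin.rev m); linarith) hspread
    have h2 : xt m - xt (Fin.rev m) < d / Real.sqrt 3 :=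
      lt_of_le_of_lt (by have := hlo (Fin.rev m); have := hhi m; linarith) hspread
    have hsm := hsym m
    have habs : |2 * (c - xt m)| < d / Real.sqrt 3 := by
      rw [abs_lt]; constructor <;> nlinarith
    have hsq : (2 * (c - xt m)) ^ 2 < d ^ 2 / 3 := by
      rw [← hrt3sq]
      exact sq_lt_sq' (abs_lt.mp habs).1 (abs_lt.mp habs).2
    have hs : 3 * (c - xt m) ^ 2 < d ^ 2 := by nlinarith
    have e1 : x - xt m = (x - c) + (c - xt m) := by ring
    have e2 : x - xt (Fin.rev m) = (x - c) - (c - xt m) := by rw [hsm]; ring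
    rw [e1, e2]
    exact pair_max d (x - c) (c - xt m) hd (sub_ne_zero.mpr hx) hs
  have hrev : ∀ y : ℝ, ∑ m, 1 / ((y - xt (Fin.rev m)) ^ 2 + d ^ 2)
      = ∑ m, 1 / ((y - xt m) ^ 2 + d ^ 2) := fun y =>
    Fintype.sum_bijective Fin.rev Fin.rev_involutive.bijective _ _ (fun m => rfl)
  have h2 : (2:ℝ) * ∑ m, 1 / ((x - xt m) ^ 2 + d ^ 2)
      < 2 * ∑ m, 1 / ((c - xt m) ^ 2 + d ^ 2) := by
    have e : (2:ℝ) * ∑ m, 1 / ((x - xt m) ^ 2 + d ^ 2)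
        = ∑ m, (1 / ((x - xt m) ^ 2 + d ^ 2) + 1 / ((x - xt (Fin.rev m)) ^ 2 + d ^ 2)) := by
      rw [Finset.sum_add_distrib, hrev, two_mul]
    rw [e, Finset.mul_sum]
    exact Finset.sum_lt_sum_of_nonempty Finset.univ_nonempty (fun i _ => key i)
  rw [hL x, hL c]
  linarith
end
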